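/- Under the saturated marginal structural model setup, if λ₀ is strictly positive on a set of positive Lebesgue measure, then there exists a unique β* ∈ ℝ with h(β*) = 0; that is, the population full-data estimating equation ∫₀^τ {ℰ(β(t),t) − ℰ(β*,t)}·(f₀(t)+f₁(t)) dt = 0 has exactly one real solution β* (the time-averaged log hazard ratio). -/

import Mathlib

open MeasureTheory Filter Topology

/-- Potential-outcome survival function `S_a(t) = exp(-∫₀ᵗ e^{β(u)·a} λ₀(u) du)`. -/
noncomputable def Ssurv (lam0 bet : ℝ → ℝ) (a t : ℝ) : ℝ :=
  Real.exp (-(∫ u in (0:ℝ)..t, Real.exp (bet u * a) * lam0 u))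

/-- Potential-outcome density `f_a(t) = e^{β(t)·a} λ₀(t) S_a(t)`. -/
noncomputable def fdens (lam0 bet : ℝ → ℝ) (a t : ℝ) : ℝ :=
  Real.exp (bet t * a) * lam0 t * Ssurv lam0 bet a t

/-- `ℰ(b,t) = e^b S₁(t) / (S₀(t) + e^b S₁(t))`. -/
noncomputable def Efun (lam0 bet : ℝ → ℝ) (b t : ℝ) : ℝ :=
  Real.exp b * Ssurv lam0 bet 1 t /
    (Ssurv lam0 bet 0 t + Real.exp b * Ssurv lam0 bet 1 t)

/-- Population full-data estimating function
`h(b) = ∫₀^τ (ℰ(β(t),t) - ℰ(b,t)) (f₀(t) + f₁(t)) dt`. -/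
noncomputable def hfun (τ : ℝ) (lam0 bet : ℝ → ℝ) (b : ℝ) : ℝ :=
  ∫ t in (0:ℝ)..τ,
    (Efun lam0 bet (bet t) t - Efun lam0 bet b t) *
      (fdens lam0 bet 0 t + fdens lam0 bet 1 t)

/-- The combined density weight `w(t) = f₀(t) + f₁(t)`. -/
noncomputable def wfun (lam0 bet : ℝ → ℝ) (t : ℝ) : ℝ :=
  fdens lam0 bet 0 t + fdens lam0 bet 1 t

lemma frac_pos {c x : ℝ} (hc : 0 < c) (hx : 0 < x) : 0 < x / (c + x) :=
  div_pos hx (by linarith)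

lemma frac_lt_one {c x : ℝ} (hc : 0 < c) (hx : 0 < x) : x / (c + x) < 1 :=
  (div_lt_one (by linarith)).2 (by linarith)

lemma frac_strictMono {c x y : ℝ} (hc : 0 < c) (hx : 0 < x) (hxy : x < y) :
    x / (c + x) < y / (c + y) := by
  rw [div_lt_div_iff₀ (by linarith) (by linarith)]
  nlinarith

lemma exp_frac_tendsto_atBot (S0 S1 : ℝ) (h0 : 0 < S0) :
    Tendsto (fun b => Real.exp b * S1 / (S0 + Real.exp b * S1)) atBot (𝓝 0) := by
  have h1 : Tendsto (fun b => Real.exp b * S1) atBot (𝓝 (0 * S1)) :=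
    Real.tendsto_exp_atBot.mul_const S1
  rw [zero_mul] at h1
  have h2 : Tendsto (fun b => S0 + Real.exp b * S1) atBot (𝓝 (S0 + 0)) :=
    tendsto_const_nhds.add h1
  have := h1.div h2 (by rw [add_zero]; exact h0.ne')
  rw [zero_div] at this
  exact this

lemma exp_frac_tendsto_atTop (S0 S1 : ℝ) (h0 : 0 < S0) (h1 : 0 < S1) :
    Tendsto (fun b => Real.exp b * S1 / (S0 + Real.exp b * S1)) atTop (𝓝 1) := by
  have key : ∀ b : ℝ, Real.exp b * S1 / (S0 + Real.exp b * S1)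
      = S1 / (S0 * Real.exp (-b) + S1) := by
    intro b
    rw [Real.exp_neg]
    field_simp
  simp_rw [key]
  have h2 : Tendsto (fun b : ℝ => S0 * Real.exp (-b) + S1) atTop (𝓝 (S0 * 0 + S1)) :=
    (tendsto_const_nhds.mul Real.tendsto_exp_neg_atTop_nhds_zero).add tendsto_const_nhds
  have h3 := (tendsto_const_nhds (x := S1)).div h2 (by rw [mul_zero, zero_add]; exact h1.ne')
  have h4 : S1 / (S0 * 0 + S1) = 1 := by field_simp; ring
  rw [h4] at h3
  exact h3.congr fun b => rfl

/-- Under the saturated marginal structural model setup, if `λ₀` is strictly positive on a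
set of positive Lebesgue measure, then the population full-data estimating equation
`h(β*) = 0` has a unique real solution (the time-averaged log hazard ratio). -/
theorem time_averaged_log_hazard_ratio_exists_unique
    (τ : ℝ) (hτ : 0 < τ) (lam0 bet : ℝ → ℝ)
    (hlam_meas : Measurable lam0) (hbet_meas : Measurable bet)
    (hlam_nonneg : ∀ t, 0 ≤ lam0 t)
    (hlam_int : IntegrableOn lam0 (Set.Icc 0 τ))
    (hbetlam_int : IntegrableOn (fun t => Real.exp (bet t) * lam0 t) (Set.Icc 0 τ))
    (hpos : 0 < volume {t | t ∈ Set.Icc 0 τ ∧ 0 < lam0 t}) :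
    ∃! b : ℝ, hfun τ lam0 bet b = 0 := by
  classical
  set μ : Measure ℝ := volume.restrict (Set.Ioc (0:ℝ) τ) with hμ_def
  -- positivity of the survival functions
  have hS0pos : ∀ t, 0 < Ssurv lam0 bet 0 t := fun t => Real.exp_pos _
  have hS1pos : ∀ t, 0 < Ssurv lam0 bet 1 t := fun t => Real.exp_pos _
  -- pointwise properties of Efun
  have hEpos : ∀ b t, 0 < Efun lam0 bet b t := fun b t =>
    frac_pos (hS0pos t) (mul_pos (Real.exp_pos b) (hS1pos t))
  have hElt1 : ∀ b t, Efun lam0 bet b t < 1 := fun b t =>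
    frac_lt_one (hS0pos t) (mul_pos (Real.exp_pos b) (hS1pos t))
  have hEmono : ∀ (t : ℝ) {b1 b2 : ℝ}, b1 < b2 →
      Efun lam0 bet b1 t < Efun lam0 bet b2 t := by
    intro t b1 b2 hb
    exact frac_strictMono (hS0pos t) (mul_pos (Real.exp_pos b1) (hS1pos t))
      (mul_lt_mul_of_pos_right (Real.exp_lt_exp.2 hb) (hS1pos t))
  have hEcont_b : ∀ t, Continuous (fun b => Efun lam0 bet b t) := by
    intro t
    apply (Real.continuous_exp.mul continuous_const).div
      (continuous_const.add (Real.continuous_exp.mul continuous_const))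
    intro b
    exact (add_pos (hS0pos t) (mul_pos (Real.exp_pos b) (hS1pos t))).ne'
  have hEbot : ∀ t, Tendsto (fun b => Efun lam0 bet b t) atBot (𝓝 0) := fun t =>
    exp_frac_tendsto_atBot _ _ (hS0pos t)
  have hEtop : ∀ t, Tendsto (fun b => Efun lam0 bet b t) atTop (𝓝 1) := fun t =>
    exp_frac_tendsto_atTop _ _ (hS0pos t) (hS1pos t)
  -- integrability of the hazard integrands
  have huIcc : Set.uIcc (0:ℝ) τ = Set.Icc 0 τ := Set.uIcc_of_le hτ.le
  have hg0_int : IntegrableOn (fun u => Real.exp (bet u * 0) * lam0 u) (Set.uIcc 0 τ) := by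
    have e : (fun u => Real.exp (bet u * 0) * lam0 u) = lam0 := by
      funext u; simp
    rw [huIcc, e]; exact hlam_int
  have hg1_int : IntegrableOn (fun u => Real.exp (bet u * 1) * lam0 u) (Set.uIcc 0 τ) := by
    have e : (fun u => Real.exp (bet u * 1) * lam0 u)
        = fun u => Real.exp (bet u) * lam0 u := by
      funext u; rw [mul_one]
    rw [huIcc, e]; exact hbetlam_int
  -- continuity of the survival functions on [0, τ]
  have hS0cont : ContinuousOn (Ssurv lam0 bet 0) (Set.Icc 0 τ) := by
    have h := intervalIntegral.continuousOn_primitive_interval (a := (0:ℝ)) (b := τ)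
      (μ := volume) hg0_int
    rw [huIcc] at h
    exact Real.continuous_exp.comp_continuousOn h.neg
  have hS1cont : ContinuousOn (Ssurv lam0 bet 1) (Set.Icc 0 τ) := by
    have h := intervalIntegral.continuousOn_primitive_interval (a := (0:ℝ)) (b := τ)
      (μ := volume) hg1_int
    rw [huIcc] at h
    exact Real.continuous_exp.comp_continuousOn h.neg
  -- survival functions are at most 1 for t ≥ 0
  have hS_le : ∀ (a t : ℝ), 0 ≤ t → Ssurv lam0 bet a t ≤ 1 := by
    intro a t ht
    unfold Ssurv
    rw [Real.exp_le_one_iff]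
    refine neg_nonpos.2 (intervalIntegral.integral_nonneg ht fun u _ => ?_)
    exact mul_nonneg (Real.exp_pos _).le (hlam_nonneg u)
  -- properties of the weight
  have hw_nonneg : ∀ t, 0 ≤ wfun lam0 bet t := by
    intro t
    unfold wfun fdens
    have h1 : 0 ≤ Real.exp (bet t * 0) * lam0 t * Ssurv lam0 bet 0 t :=
      mul_nonneg (mul_nonneg (Real.exp_pos _).le (hlam_nonneg t)) (hS0pos t).le
    have h2 : 0 ≤ Real.exp (bet t * 1) * lam0 t * Ssurv lam0 bet 1 t :=
      mul_nonneg (mul_nonneg (Real.exp_pos _).le (hlam_nonneg t)) (hS1pos t).le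
    linarith
  have hw_pos : ∀ t, 0 < lam0 t → 0 < wfun lam0 bet t := by
    intro t hl
    unfold wfun fdens
    have h1 : 0 < Real.exp (bet t * 0) * lam0 t * Ssurv lam0 bet 0 t :=
      mul_pos (mul_pos (Real.exp_pos _) hl) (hS0pos t)
    have h2 : 0 ≤ Real.exp (bet t * 1) * lam0 t * Ssurv lam0 bet 1 t :=
      mul_nonneg (mul_nonneg (Real.exp_pos _).le (hlam_nonneg t)) (hS1pos t).le
    linarith
  -- measurability
  have hS0m : AEStronglyMeasurable (Ssurv lam0 bet 0) μ :=
    (hS0cont.mono Set.Ioc_subset_Icc_self).aestronglyMeasurable measurableSet_Ioc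
  have hS1m : AEStronglyMeasurable (Ssurv lam0 bet 1) μ :=
    (hS1cont.mono Set.Ioc_subset_Icc_self).aestronglyMeasurable measurableSet_Ioc
  have hwm : AEStronglyMeasurable (wfun lam0 bet) μ := by
    have hm0 : AEStronglyMeasurable (fdens lam0 bet 0) μ :=
      ((Real.measurable_exp.comp (hbet_meas.mul_const 0)).mul
        hlam_meas).aestronglyMeasurable.mul hS0m
    have hm1 : AEStronglyMeasurable (fdens lam0 bet 1) μ :=
      ((Real.measurable_exp.comp (hbet_meas.mul_const 1)).mul
        hlam_meas).aestronglyMeasurable.mul hS1m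
    exact hm0.add hm1
  have hw_int : Integrable (wfun lam0 bet) μ := by
    have hbd : IntegrableOn (fun t => lam0 t + Real.exp (bet t) * lam0 t) (Set.Icc 0 τ) :=
      hlam_int.add hbetlam_int
    refine Integrable.mono' (hbd.mono_set Set.Ioc_subset_Icc_self) hwm ?_
    rw [hμ_def, ae_restrict_iff' measurableSet_Ioc]
    refine Eventually.of_forall fun t ht => ?_
    rw [Real.norm_eq_abs, abs_of_nonneg (hw_nonneg t)]
    have h0 := hS_le 0 t ht.1.le
    have h1 := hS_le 1 t ht.1.le
    have hl := hlam_nonneg t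
    have he := (Real.exp_pos (bet t)).le
    unfold wfun fdens
    simp only [mul_zero, Real.exp_zero, one_mul, mul_one]
    have k1 : lam0 t * Ssurv lam0 bet 0 t ≤ lam0 t := mul_le_of_le_one_right hl h0
    have k2 : Real.exp (bet t) * lam0 t * Ssurv lam0 bet 1 t ≤ Real.exp (bet t) * lam0 t :=
      mul_le_of_le_one_right (mul_nonneg he hl) h1
    linarith
  have hEm : ∀ b, AEStronglyMeasurable (fun t => Efun lam0 bet b t) μ := by
    intro b
    exact ((aemeasurable_const.mul hS1m.aemeasurable).div
      (hS0m.aemeasurable.add (aemeasurable_const.mul hS1m.aemeasurable))).aestronglyMeasurable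
  have hEbm : AEStronglyMeasurable (fun t => Efun lam0 bet (bet t) t) μ := by
    have hexp : AEMeasurable (fun t => Real.exp (bet t)) μ :=
      (Real.measurable_exp.comp hbet_meas).aemeasurable
    exact ((hexp.mul hS1m.aemeasurable).div
      (hS0m.aemeasurable.add (hexp.mul hS1m.aemeasurable))).aestronglyMeasurable
  -- integrability of the integrands
  have hGint : ∀ b, Integrable (fun t => Efun lam0 bet b t * wfun lam0 bet t) μ := by
    intro b
    refine Integrable.mono' hw_int ((hEm b).mul hwm) (Eventually.of_forall fun t => ?_)
    rw [Real.norm_eq_abs, abs_of_nonneg (mul_nonneg (hEpos b t).le (hw_nonneg t))]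
    exact mul_le_of_le_one_left (hw_nonneg t) (hElt1 b t).le
  have hCint : Integrable (fun t => Efun lam0 bet (bet t) t * wfun lam0 bet t) μ := by
    refine Integrable.mono' hw_int (hEbm.mul hwm) (Eventually.of_forall fun t => ?_)
    rw [Real.norm_eq_abs, abs_of_nonneg (mul_nonneg (hEpos (bet t) t).le (hw_nonneg t))]
    exact mul_le_of_le_one_left (hw_nonneg t) (hElt1 (bet t) t).le
  set C : ℝ := ∫ t, Efun lam0 bet (bet t) t * wfun lam0 bet t ∂μ with hC_def
  set W : ℝ := ∫ t, wfun lam0 bet t ∂μ with hW_def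
  set g : ℝ → ℝ := fun b => ∫ t, Efun lam0 bet b t * wfun lam0 bet t ∂μ with hg_def
  -- the estimating function in terms of g
  have hfun_eq : ∀ b, hfun τ lam0 bet b = C - g b := by
    intro b
    have e1 : hfun τ lam0 bet b
        = ∫ t in Set.Ioc (0:ℝ) τ, (Efun lam0 bet (bet t) t - Efun lam0 bet b t)
            * wfun lam0 bet t := by
      rw [hfun, intervalIntegral.integral_of_le hτ.le]; rfl
    rw [e1]
    have e2 : (fun t => (Efun lam0 bet (bet t) t - Efun lam0 bet b t) * wfun lam0 bet t)
        = fun t => Efun lam0 bet (bet t) t * wfun lam0 bet t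
            - Efun lam0 bet b t * wfun lam0 bet t := by
      funext t; ring
    rw [show (∫ t in Set.Ioc (0:ℝ) τ, (Efun lam0 bet (bet t) t - Efun lam0 bet b t)
        * wfun lam0 bet t) = ∫ t, (Efun lam0 bet (bet t) t - Efun lam0 bet b t)
        * wfun lam0 bet t ∂μ from rfl, e2, integral_sub hCint (hGint b)]
  -- positivity of integrals supported where lam0 > 0
  have hsupp : ∀ f : ℝ → ℝ, (∀ t, 0 < lam0 t → f t ≠ 0) →
      0 < μ (Function.support f) := by
    intro f hf
    have hsub : {t | t ∈ Set.Icc 0 τ ∧ 0 < lam0 t} \ {0}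
        ⊆ Function.support f ∩ Set.Ioc 0 τ := by
      rintro t ⟨⟨htI, hl⟩, ht0⟩
      refine ⟨hf t hl, lt_of_le_of_ne htI.1 (Ne.symm ht0), htI.2⟩
    calc 0 < volume {t | t ∈ Set.Icc 0 τ ∧ 0 < lam0 t} := hpos
      _ ≤ volume (({t | t ∈ Set.Icc 0 τ ∧ 0 < lam0 t} \ {0}) ∪ {0}) := by
          apply measure_mono
          intro x hx
          by_cases hx0 : x = 0
          · exact Or.inr hx0
          · exact Or.inl ⟨hx, hx0⟩
      _ ≤ volume ({t | t ∈ Set.Icc 0 τ ∧ 0 < lam0 t} \ {0}) + volume ({0} : Set ℝ) :=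
          measure_union_le _ _
      _ = volume ({t | t ∈ Set.Icc 0 τ ∧ 0 < lam0 t} \ {0}) := by
          rw [Real.volume_singleton, add_zero]
      _ ≤ volume (Function.support f ∩ Set.Ioc 0 τ) := measure_mono hsub
      _ = μ (Function.support f) := (Measure.restrict_apply' measurableSet_Ioc).symm
  -- g is continuous
  have hg_cont : Continuous g := by
    refine continuous_of_dominated (fun b => (hEm b).mul hwm)
      (fun b => Eventually.of_forall fun t => ?_) hw_int
      (Eventually.of_forall fun t => (hEcont_b t).mul continuous_const)
    rw [Real.norm_eq_abs, abs_of_nonneg (mul_nonneg (hEpos b t).le (hw_nonneg t))]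
    exact mul_le_of_le_one_left (hw_nonneg t) (hElt1 b t).le
  -- g is strictly monotone
  have hg_mono : StrictMono g := by
    intro b1 b2 hb
    have hintD : Integrable
        (fun t => (Efun lam0 bet b2 t - Efun lam0 bet b1 t) * wfun lam0 bet t) μ :=
      ((hGint b2).sub (hGint b1)).congr (Eventually.of_forall fun t => by simp only [Pi.sub_apply]; ring)
    have key : 0 < ∫ t, (Efun lam0 bet b2 t - Efun lam0 bet b1 t) * wfun lam0 bet t ∂μ := by
      rw [integral_pos_iff_support_of_nonneg_ae
        (Eventually.of_forall fun t =>
          mul_nonneg (sub_nonneg.2 (hEmono t hb).le) (hw_nonneg t)) hintD]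
      refine hsupp _ fun t hl => ?_
      exact (mul_pos (sub_pos.2 (hEmono t hb)) (hw_pos t hl)).ne'
    have e : g b2 - g b1
        = ∫ t, (Efun lam0 bet b2 t - Efun lam0 bet b1 t) * wfun lam0 bet t ∂μ := by
      rw [hg_def, ← integral_sub (hGint b2) (hGint b1)]
      exact integral_congr_ae (Eventually.of_forall fun t => by ring)
    linarith
  -- limits of g at ±∞
  have hg_bot : Tendsto g atBot (𝓝 0) := by
    have h := tendsto_integral_filter_of_dominated_convergence (μ := μ)
      (F := fun b t => Efun lam0 bet b t * wfun lam0 bet t)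
      (f := fun _ => (0:ℝ)) (bound := wfun lam0 bet) (l := atBot)
      (Eventually.of_forall fun b => (hEm b).mul hwm)
      (Eventually.of_forall fun b => Eventually.of_forall fun t => by
        rw [Real.norm_eq_abs, abs_of_nonneg (mul_nonneg (hEpos b t).le (hw_nonneg t))]
        exact mul_le_of_le_one_left (hw_nonneg t) (hElt1 b t).le)
      hw_int
      (Eventually.of_forall fun t => by
        simpa using (hEbot t).mul_const (wfun lam0 bet t))
    simpa using h
  have hg_top : Tendsto g atTop (𝓝 W) := by
    have h := tendsto_integral_filter_of_dominated_convergence (μ := μ)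
      (F := fun b t => Efun lam0 bet b t * wfun lam0 bet t)
      (f := wfun lam0 bet) (bound := wfun lam0 bet) (l := atTop)
      (Eventually.of_forall fun b => (hEm b).mul hwm)
      (Eventually.of_forall fun b => Eventually.of_forall fun t => by
        rw [Real.norm_eq_abs, abs_of_nonneg (mul_nonneg (hEpos b t).le (hw_nonneg t))]
        exact mul_le_of_le_one_left (hw_nonneg t) (hElt1 b t).le)
      hw_int
      (Eventually.of_forall fun t => by
        simpa using (hEtop t).mul_const (wfun lam0 bet t))
    exact h
  -- C is strictly between 0 and W
  have hC_pos : 0 < C := by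
    rw [hC_def, integral_pos_iff_support_of_nonneg_ae
      (Eventually.of_forall fun t => mul_nonneg (hEpos (bet t) t).le (hw_nonneg t)) hCint]
    refine hsupp _ fun t hl => ?_
    exact (mul_pos (hEpos (bet t) t) (hw_pos t hl)).ne'
  have hC_lt_W : C < W := by
    have hintD : Integrable
        (fun t => (1 - Efun lam0 bet (bet t) t) * wfun lam0 bet t) μ :=
      (hw_int.sub hCint).congr (Eventually.of_forall fun t => by simp only [Pi.sub_apply]; ring)
    have key : 0 < ∫ t, (1 - Efun lam0 bet (bet t) t) * wfun lam0 bet t ∂μ := by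
      rw [integral_pos_iff_support_of_nonneg_ae
        (Eventually.of_forall fun t =>
          mul_nonneg (sub_nonneg.2 (hElt1 (bet t) t).le) (hw_nonneg t)) hintD]
      refine hsupp _ fun t hl => ?_
      exact (mul_pos (sub_pos.2 (hElt1 (bet t) t)) (hw_pos t hl)).ne'
    have e : W - C
        = ∫ t, (1 - Efun lam0 bet (bet t) t) * wfun lam0 bet t ∂μ := by
      rw [hW_def, hC_def, ← integral_sub hw_int hCint]
      exact integral_congr_ae (Eventually.of_forall fun t => by ring)
    linarith
  -- existence via the intermediate value theorem
  obtain ⟨b1, hb1⟩ := (hg_bot.eventually_lt_const hC_pos).exists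
  obtain ⟨b2, hb2⟩ := (hg_top.eventually_const_lt hC_lt_W).exists
  have hb12 : b1 ≤ b2 := (hg_mono.lt_iff_lt.1 (hb1.trans hb2)).le
  obtain ⟨b, -, hgb⟩ := intermediate_value_Icc hb12 hg_cont.continuousOn
    (Set.mem_Icc.2 ⟨hb1.le, hb2.le⟩)
  refine ⟨b, ?_, ?_⟩
  · show hfun τ lam0 bet b = 0
    rw [hfun_eq b, hgb, sub_self]
  · intro b' hb'
    have h1 : g b' = C := by
      have := hfun_eq b'
      rw [hb'] at this
      linarith
    exact hg_mono.injective (h1.trans hgb.symm)
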